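/- Let d ≥ 2 and let ν : 2^D → ℝ be a cooperative game on D = {1,…,d} with ν(∅) = 0. Then the vector of Shapley values (φ_1^SV[ν],…,φ_d^SV[ν]) is the unique minimizer of the weighted least squares objective Σ_{S ⊆ D} μ(S)·(ν(S) − Σ_{i ∈ S} φ_i)² over the affine set {φ ∈ ℝ^d : Σ_{i=1}^d φ_i = ν(D)}; that is, the least-squares (KernelSHAP) characterization of the Shapley value agrees with the marginal-contribution formula. -/

import Mathlib

open Finset

/-- Shapley value of player `i` in the game `ν` on `D = Fin d`. -/
noncomputable def shapley (d : ℕ) (ν : Finset (Fin d) → ℝ) (i : Fin d) : ℝ :=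
  (1 / (d : ℝ)) * ∑ S ∈ ((Finset.univ : Finset (Fin d)).erase i).powerset,
    (ν (insert i S) - ν S) / ((d - 1).choose S.card : ℝ)

/-- Shapley kernel weights `μ(S)`. -/
noncomputable def shapleyWeight (d : ℕ) (S : Finset (Fin d)) : ℝ :=
  if 0 < S.card ∧ S.card < d then 1 / ((d - 2).choose (S.card - 1) : ℝ) else 0

lemma nat_id1 {d t : ℕ} (hd : 2 ≤ d) (ht : t ≤ d - 2) :
    (d-1) * (d.choose (t+1)) * ((d-2).choose t) = d * ((d-1).choose t) * ((d-1).choose (t+1)) := by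
  have h1 : d * ((d-1).choose t) = d.choose (t+1) * (t+1) := by
    have := Nat.add_one_mul_choose_eq (d-1) t
    rwa [Nat.sub_add_cancel (by omega)] at this
  have h2 : (d-1) * ((d-2).choose t) = (d-1).choose (t+1) * (t+1) := by
    have := Nat.add_one_mul_choose_eq (d-2) t
    rwa [show d - 2 + 1 = d - 1 by omega] at this
  have key : ((d-1) * (d.choose (t+1)) * ((d-2).choose t)) * (t+1)
      = (d * ((d-1).choose t) * ((d-1).choose (t+1))) * (t+1) := by
    calc ((d-1) * (d.choose (t+1)) * ((d-2).choose t)) * (t+1)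
        = (d.choose (t+1)) * ((d-1) * ((d-2).choose t) * (t+1)) := by ring
      _ = (d.choose (t+1)) * ((d-1).choose (t+1) * (t+1) * (t+1)) := by rw [h2]
      _ = (d.choose (t+1) * (t+1)) * ((d-1).choose (t+1)) * (t+1) := by ring
      _ = (d * ((d-1).choose t)) * ((d-1).choose (t+1)) * (t+1) := by rw [h1]
  exact Nat.eq_of_mul_eq_mul_right (Nat.succ_pos t) key

lemma coeff {d t : ℕ} (hd : 2 ≤ d) (ht : t ≤ d - 2) (x : ℝ) :
    ((d:ℝ) - 1) * ((1/(d:ℝ)) * (x / ((d-1).choose t : ℝ) + x / ((d-1).choose (t+1) : ℝ)))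
      = x / (((d-2).choose t : ℝ)) := by
  have hA : (0:ℝ) < ((d-1).choose t : ℝ) := by
    exact_mod_cast Nat.choose_pos (by omega : t ≤ d - 1)
  have hB : (0:ℝ) < ((d-1).choose (t+1) : ℝ) := by
    exact_mod_cast Nat.choose_pos (by omega : t + 1 ≤ d - 1)
  have hC : (0:ℝ) < ((d-2).choose t : ℝ) := by
    exact_mod_cast Nat.choose_pos ht
  have hd0 : (0:ℝ) < (d:ℝ) := by positivity
  have pascal : (d.choose (t+1) : ℝ) = ((d-1).choose t : ℝ) + ((d-1).choose (t+1) : ℝ) := by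
    have : d.choose (t+1) = (d-1).choose t + (d-1).choose (t+1) := by
      have := Nat.choose_succ_succ (d-1) t
      simp only [Nat.succ_eq_add_one] at this
      rwa [show d - 1 + 1 = d by omega] at this
    exact_mod_cast this
  have key : ((d:ℝ)-1) * (d.choose (t+1) : ℝ) * ((d-2).choose t : ℝ)
      = (d:ℝ) * ((d-1).choose t : ℝ) * ((d-1).choose (t+1) : ℝ) := by
    have := nat_id1 hd ht
    have hcast : (((d-1) * (d.choose (t+1)) * ((d-2).choose t) : ℕ) : ℝ)
        = ((d * ((d-1).choose t) * ((d-1).choose (t+1)) : ℕ) : ℝ) := by exact_mod_cast this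
    push_cast at hcast
    rw [Nat.cast_sub (by omega : 1 ≤ d)] at hcast
    push_cast at hcast
    linarith [hcast]
  rw [pascal] at key
  field_simp
  linear_combination x * key

lemma erase_comm' {d : ℕ} (s : Finset (Fin d)) (a b : Fin d) :
    (s.erase a).erase b = (s.erase b).erase a := by
  ext x; simp only [mem_erase]; tauto

lemma split4 {d : ℕ} (f : Finset (Fin d) → ℝ) (i j : Fin d) (B : Finset (Fin d))
    (hiB : i ∉ insert j B) (hjB : j ∉ B) (hu : insert i (insert j B) = univ) :
    ∑ S : Finset (Fin d), f S
      = ∑ T ∈ B.powerset,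
          (f T + f (insert j T) + f (insert i T) + f (insert i (insert j T))) := by
  rw [← Finset.powerset_univ, ← hu, Finset.sum_powerset_insert hiB,
    Finset.sum_powerset_insert hjB, Finset.sum_powerset_insert hjB]
  simp only [← Finset.sum_add_distrib]
  apply Finset.sum_congr rfl
  intro T _
  ring

-- sum over powerset of 1/choose
lemma sum_inv_choose {d : ℕ} (B : Finset (Fin d)) :
    ∑ T ∈ B.powerset, (1 : ℝ) / (B.card.choose T.card : ℝ) = B.card + 1 := by
  have := Finset.sum_powerset_apply_card (fun m => (1:ℝ) / (B.card.choose m : ℝ)) (x := B)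
  rw [this]
  have : ∀ m ∈ Finset.range (B.card + 1),
      (B.card.choose m) • ((1:ℝ) / (B.card.choose m : ℝ)) = 1 := by
    intro m hm
    rw [Finset.mem_range] at hm
    have h := Nat.choose_pos (by omega : m ≤ B.card)
    rw [nsmul_eq_mul]
    field_simp
  rw [Finset.sum_congr rfl this]
  simp

lemma shapley_diff {d : ℕ} (hd : 2 ≤ d) (ν : Finset (Fin d) → ℝ) (i j : Fin d) (hij : i ≠ j) :
    ((d:ℝ) - 1) * (shapley d ν i - shapley d ν j)
      = ∑ T ∈ (((univ : Finset (Fin d)).erase i).erase j).powerset,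
          (ν (insert i T) - ν (insert j T)) / (((d-2).choose T.card : ℕ) : ℝ) := by
  set B := (((univ : Finset (Fin d)).erase i).erase j) with hB
  have hjB : j ∉ B := notMem_erase _ _
  have hiB : i ∉ B := fun h => (notMem_erase i _) (mem_of_mem_erase h)
  have hje : insert j B = univ.erase i := by
    apply insert_erase
    rw [mem_erase]; exact ⟨Ne.symm hij, mem_univ j⟩
  have hie : insert i B = univ.erase j := by
    rw [hB, erase_comm']
    apply insert_erase
    rw [mem_erase]; exact ⟨hij, mem_univ i⟩
  have hBcard : B.card = d - 2 := by
    have hmem : j ∈ univ.erase i := by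
      rw [mem_erase]; exact ⟨Ne.symm hij, mem_univ j⟩
    rw [hB, card_erase_of_mem hmem, card_erase_of_mem (mem_univ i), card_univ, Fintype.card_fin]
    omega
  rw [shapley, shapley, ← hje, ← hie, Finset.sum_powerset_insert hjB,
    Finset.sum_powerset_insert hiB, ← mul_sub]
  simp only [← Finset.sum_add_distrib, ← Finset.sum_sub_distrib]
  rw [Finset.mul_sum, Finset.mul_sum]
  apply Finset.sum_congr rfl
  intro T hT
  have hTB : T ⊆ B := mem_powerset.1 hT
  have hiT : i ∉ T := fun h => hiB (hTB h)
  have hjT : j ∉ T := fun h => hjB (hTB h)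
  have ht : T.card ≤ d - 2 := hBcard ▸ card_le_card hTB
  rw [card_insert_of_notMem hjT, card_insert_of_notMem hiT, Finset.insert_comm]
  linear_combination coeff hd ht (ν (insert i T) - ν (insert j T))

lemma grad_const {d : ℕ} (hd : 2 ≤ d) (ν : Finset (Fin d) → ℝ) (i j : Fin d) :
    (∑ S : Finset (Fin d), if i ∈ S then
        shapleyWeight d S * (ν S - ∑ k ∈ S, shapley d ν k) else 0)
    = ∑ S : Finset (Fin d), if j ∈ S then
        shapleyWeight d S * (ν S - ∑ k ∈ S, shapley d ν k) else 0 := by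
  rcases eq_or_ne i j with rfl | hij
  · rfl
  set B := (((univ : Finset (Fin d)).erase i).erase j) with hB
  have hjB : j ∉ B := notMem_erase _ _
  have hiB : i ∉ B := fun h => (notMem_erase i _) (mem_of_mem_erase h)
  have hiB' : i ∉ insert j B := by
    rw [mem_insert]; rintro (h | h); exacts [hij h, hiB h]
  have hje : insert j B = univ.erase i := by
    apply insert_erase
    rw [mem_erase]; exact ⟨Ne.symm hij, mem_univ j⟩
  have huniv : insert i (insert j B) = univ := by
    rw [hje, insert_erase (mem_univ i)]
  have hBcard : B.card = d - 2 := by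
    have hmem : j ∈ univ.erase i := by
      rw [mem_erase]; exact ⟨Ne.symm hij, mem_univ j⟩
    rw [hB, card_erase_of_mem hmem, card_erase_of_mem (mem_univ i), card_univ, Fintype.card_fin]
    omega
  have wval : ∀ T ∈ B.powerset, ∀ k : Fin d, k ∉ T →
      shapleyWeight d (insert k T) = 1 / (((d-2).choose T.card : ℕ) : ℝ) := by
    intro T hT k hkT
    have ht : T.card ≤ d - 2 := hBcard ▸ card_le_card (mem_powerset.1 hT)
    rw [shapleyWeight, card_insert_of_notMem hkT, if_pos ⟨Nat.succ_pos _, by omega⟩]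
    simp
  have hgi : (∑ S : Finset (Fin d), if i ∈ S then
        shapleyWeight d S * (ν S - ∑ k ∈ S, shapley d ν k) else 0)
      = ∑ T ∈ B.powerset,
          ((1 / (((d-2).choose T.card : ℕ) : ℝ)) *
              (ν (insert i T) - ∑ k ∈ insert i T, shapley d ν k)
            + shapleyWeight d (insert i (insert j T)) *
              (ν (insert i (insert j T)) - ∑ k ∈ insert i (insert j T), shapley d ν k)) := by
    rw [split4 _ i j B hiB' hjB huniv]
    apply Finset.sum_congr rfl
    intro T hT
    have hTB := mem_powerset.1 hT
    have hiT : i ∉ T := fun h => hiB (hTB h)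
    have hijT : i ∉ insert j T := by
      rw [mem_insert]; rintro (h | h); exacts [hij h, hiT h]
    rw [if_neg hiT, if_neg hijT, if_pos (mem_insert_self i T),
      if_pos (mem_insert_self i (insert j T)), wval T hT i hiT]
    ring
  have hgj : (∑ S : Finset (Fin d), if j ∈ S then
        shapleyWeight d S * (ν S - ∑ k ∈ S, shapley d ν k) else 0)
      = ∑ T ∈ B.powerset,
          ((1 / (((d-2).choose T.card : ℕ) : ℝ)) *
              (ν (insert j T) - ∑ k ∈ insert j T, shapley d ν k)
            + shapleyWeight d (insert i (insert j T)) *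
              (ν (insert i (insert j T)) - ∑ k ∈ insert i (insert j T), shapley d ν k)) := by
    rw [split4 _ i j B hiB' hjB huniv]
    apply Finset.sum_congr rfl
    intro T hT
    have hTB := mem_powerset.1 hT
    have hjT : j ∉ T := fun h => hjB (hTB h)
    have hjiT : j ∉ insert i T := by
      rw [mem_insert]; rintro (h | h); exacts [hij h.symm, hjT h]
    rw [if_neg hjT, if_neg hjiT, if_pos (mem_insert_self j T),
      if_pos (mem_insert_of_mem (mem_insert_self j T)), wval T hT j hjT]
    ring
  rw [← sub_eq_zero, hgi, hgj, ← Finset.sum_sub_distrib]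
  have step : ∀ T ∈ B.powerset,
      ((1 / (((d-2).choose T.card : ℕ) : ℝ)) *
          (ν (insert i T) - ∑ k ∈ insert i T, shapley d ν k)
        + shapleyWeight d (insert i (insert j T)) *
          (ν (insert i (insert j T)) - ∑ k ∈ insert i (insert j T), shapley d ν k))
      - ((1 / (((d-2).choose T.card : ℕ) : ℝ)) *
          (ν (insert j T) - ∑ k ∈ insert j T, shapley d ν k)
        + shapleyWeight d (insert i (insert j T)) *
          (ν (insert i (insert j T)) - ∑ k ∈ insert i (insert j T), shapley d ν k))
      = (ν (insert i T) - ν (insert j T)) / (((d-2).choose T.card : ℕ) : ℝ)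
        - (shapley d ν i - shapley d ν j) * (1 / (((d-2).choose T.card : ℕ) : ℝ)) := by
    intro T hT
    have hTB := mem_powerset.1 hT
    have hiT : i ∉ T := fun h => hiB (hTB h)
    have hjT : j ∉ T := fun h => hjB (hTB h)
    rw [Finset.sum_insert hiT, Finset.sum_insert hjT]
    ring
  rw [Finset.sum_congr rfl step, Finset.sum_sub_distrib, ← shapley_diff hd ν i j hij, ← mul_sum]
  have hsum : ∑ T ∈ B.powerset, (1:ℝ) / (((d-2).choose T.card : ℕ) : ℝ) = (d:ℝ) - 1 := by
    rw [← hBcard, sum_inv_choose, hBcard, Nat.cast_sub (by omega : 2 ≤ d)]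
    push_cast
    ring
  rw [hsum]
  ring

lemma pair_reindex {d : ℕ} (g : Finset (Fin d) → ℝ) :
    ∑ T : Finset (Fin d), ∑ i ∈ T, g (T.erase i)
      = ∑ S : Finset (Fin d), ∑ i ∈ Sᶜ, g S := by
  rw [Finset.sum_sigma', Finset.sum_sigma']
  apply Finset.sum_nbij' (fun p => (⟨p.1.erase p.2, p.2⟩ : Σ _ : Finset (Fin d), Fin d))
    (fun p => (⟨insert p.2 p.1, p.2⟩ : Σ _ : Finset (Fin d), Fin d))
  · intro p hp
    simp only [Finset.mem_sigma, Finset.mem_univ, true_and] at hp ⊢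
    simp [Finset.mem_compl]
  · intro p hp
    simp only [Finset.mem_sigma, Finset.mem_univ, true_and, Finset.mem_compl] at hp ⊢
    exact mem_insert_self _ _
  · intro p hp
    simp only [Finset.mem_sigma, Finset.mem_univ, true_and] at hp
    simp [Finset.insert_erase hp]
  · intro p hp
    simp only [Finset.mem_sigma, Finset.mem_univ, true_and, Finset.mem_compl] at hp
    simp [Finset.erase_insert hp]
  · intro p hp
    rfl

lemma sum_shapley_eq {d : ℕ} (hd : 2 ≤ d) (ν : Finset (Fin d) → ℝ) (hν0 : ν ∅ = 0) :
    ∑ i, shapley d ν i = ν univ := by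
  have hdR : (0:ℝ) < (d:ℝ) := by
    have : 0 < d := by omega
    exact_mod_cast this
  -- step 1: rewrite the inner shapley sum as an indicator sum over all coalitions
  have step1 : ∀ i : Fin d,
      (∑ S ∈ ((univ : Finset (Fin d)).erase i).powerset,
        (ν (insert i S) - ν S) / ((d - 1).choose S.card : ℝ))
      = ∑ T : Finset (Fin d),
          (if i ∈ T then (ν T - ν (T.erase i)) / ((d-1).choose (T.card - 1) : ℝ) else 0) := by
    intro i
    symm
    have h1 : ∀ S ∈ ((univ : Finset (Fin d)).erase i).powerset,
        (if i ∈ S then (ν S - ν (S.erase i)) / ((d-1).choose (S.card - 1):ℝ) else 0) = 0 := by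
      intro S hS
      exact if_neg (fun h => (notMem_erase i univ) (mem_powerset.1 hS h))
    have h2 : ∀ S ∈ ((univ : Finset (Fin d)).erase i).powerset,
        (if i ∈ insert i S then
          (ν (insert i S) - ν ((insert i S).erase i)) /
            ((d-1).choose ((insert i S).card - 1):ℝ) else 0)
        = (ν (insert i S) - ν S) / ((d - 1).choose S.card : ℝ) := by
      intro S hS
      have hiS : i ∉ S := fun h => (notMem_erase i univ) (mem_powerset.1 hS h)
      rw [if_pos (mem_insert_self i S), Finset.erase_insert hiS, card_insert_of_notMem hiS,
        Nat.add_sub_cancel]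
    conv_lhs => rw [← Finset.powerset_univ, ← Finset.insert_erase (mem_univ i),
      Finset.sum_powerset_insert (notMem_erase i univ)]
    rw [Finset.sum_congr rfl h1, Finset.sum_congr rfl h2, Finset.sum_const_zero, zero_add]
  -- step 2: swap sums
  have step2 : ∑ i : Fin d, ∑ T : Finset (Fin d),
      (if i ∈ T then (ν T - ν (T.erase i)) / ((d-1).choose (T.card - 1) : ℝ) else 0)
      = ∑ T : Finset (Fin d), ∑ i ∈ T,
          (ν T - ν (T.erase i)) / ((d-1).choose (T.card - 1) : ℝ) := by
    rw [Finset.sum_comm]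
    apply Finset.sum_congr rfl
    intro T _
    rw [Finset.sum_ite_mem, univ_inter]
  -- step 3: split each inner sum
  have step3 : ∀ T : Finset (Fin d),
      ∑ i ∈ T, (ν T - ν (T.erase i)) / ((d-1).choose (T.card - 1):ℝ)
      = (T.card:ℝ) * (ν T / ((d-1).choose (T.card-1):ℝ))
        - ∑ i ∈ T, ν (T.erase i) / ((d-1).choose ((T.erase i).card):ℝ) := by
    intro T
    simp only [sub_div]
    rw [Finset.sum_sub_distrib, Finset.sum_const, nsmul_eq_mul]
    congr 1
    apply Finset.sum_congr rfl
    intro i hi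
    rw [Finset.card_erase_of_mem hi]
  -- step 4: reindex the second sum
  have step4 : ∑ T : Finset (Fin d), ∑ i ∈ T, ν (T.erase i) / ((d-1).choose ((T.erase i).card):ℝ)
      = ∑ S : Finset (Fin d), (Sᶜ.card : ℝ) * (ν S / ((d-1).choose S.card : ℝ)) := by
    rw [pair_reindex (fun S => ν S / ((d-1).choose S.card : ℝ))]
    apply Finset.sum_congr rfl
    intro S _
    rw [Finset.sum_const, nsmul_eq_mul]
  -- pointwise evaluation
  have final : ∀ T : Finset (Fin d),
      (T.card:ℝ) * (ν T / ((d-1).choose (T.card-1):ℝ))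
        - (Tᶜ.card:ℝ) * (ν T / ((d-1).choose T.card:ℝ))
      = if T = univ then (d:ℝ) * ν univ else 0 := by
    intro T
    have hcard : T.card ≤ d := by
      have := Finset.card_le_univ T
      simpa using this
    have hcompl : (Tᶜ.card : ℝ) = (d:ℝ) - T.card := by
      rw [Finset.card_compl, Nat.cast_sub (by simpa using hcard)]
      simp
    by_cases hT : T = univ
    · subst hT
      rw [if_pos rfl, compl_univ, Finset.card_empty, Nat.cast_zero, zero_mul, sub_zero]
      have hcu : (univ : Finset (Fin d)).card = d := by simp
      rw [hcu, Nat.choose_self, Nat.cast_one, div_one]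
    · rw [if_neg hT]
      rcases Nat.eq_zero_or_pos T.card with h0 | hpos
      · have hTe : T = ∅ := Finset.card_eq_zero.1 h0
        subst hTe
        rw [hν0]
        simp
      · have hlt : T.card < d := by
          rcases lt_or_eq_of_le hcard with h | h
          · exact h
          · exact absurd ((Finset.card_eq_iff_eq_univ (s := T)).mp
              (by rw [Fintype.card_fin]; omega)) hT
        have hA : (0:ℝ) < ((d-1).choose (T.card - 1) : ℝ) := by
          exact_mod_cast Nat.choose_pos (by omega : T.card - 1 ≤ d - 1)
        have hBpos : (0:ℝ) < ((d-1).choose T.card : ℝ) := by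
          exact_mod_cast Nat.choose_pos (by omega : T.card ≤ d - 1)
        have hid : ((d-1).choose T.card) * T.card = ((d-1).choose (T.card-1)) * (d - T.card) := by
          have := Nat.choose_succ_right_eq (d-1) (T.card - 1)
          rwa [show T.card - 1 + 1 = T.card by omega,
            show d - 1 - (T.card - 1) = d - T.card by omega] at this
        have hidR : ((d-1).choose T.card : ℝ) * T.card
            = ((d-1).choose (T.card-1) : ℝ) * ((d:ℝ) - T.card) := by
          have h' : (((d-1).choose T.card * T.card : ℕ) : ℝ)
              = (((d-1).choose (T.card-1) * (d - T.card) : ℕ) : ℝ) := by exact_mod_cast hid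
          rw [Nat.cast_mul, Nat.cast_mul, Nat.cast_sub hlt.le] at h'
          exact h'
        rw [hcompl]
        field_simp
        linear_combination (ν T) * hidR
  calc ∑ i, shapley d ν i
      = (1/(d:ℝ)) * ∑ i : Fin d, ∑ S ∈ ((univ : Finset (Fin d)).erase i).powerset,
          (ν (insert i S) - ν S) / ((d - 1).choose S.card : ℝ) := by
        rw [Finset.mul_sum]
        rfl
    _ = (1/(d:ℝ)) * ((d:ℝ) * ν univ) := by
        rw [Finset.sum_congr rfl (fun i _ => step1 i), step2,
          Finset.sum_congr rfl (fun T _ => step3 T), Finset.sum_sub_distrib, step4,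
          ← Finset.sum_sub_distrib, Finset.sum_congr rfl (fun T _ => final T),
          Finset.sum_ite_eq' univ univ (fun _ => (d:ℝ) * ν univ)]
        rw [if_pos (mem_univ _)]
    _ = ν univ := by field_simp

lemma weight_nonneg {d : ℕ} (S : Finset (Fin d)) : 0 ≤ shapleyWeight d S := by
  rw [shapleyWeight]
  split
  · positivity
  · exact le_refl 0

lemma weight_singleton {d : ℕ} (hd : 2 ≤ d) (i : Fin d) : shapleyWeight d {i} = 1 := by
  rw [shapleyWeight, card_singleton, if_pos ⟨one_pos, by omega⟩]
  simp

lemma expand {d : ℕ} (ν : Finset (Fin d) → ℝ) (χ ψ : Fin d → ℝ) :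
    ∑ S : Finset (Fin d), shapleyWeight d S * (ν S - ∑ k ∈ S, ψ k)^2
    = (∑ S : Finset (Fin d), shapleyWeight d S * (ν S - ∑ k ∈ S, χ k)^2)
      - 2 * (∑ S : Finset (Fin d),
          shapleyWeight d S * (ν S - ∑ k ∈ S, χ k) * (∑ k ∈ S, (ψ k - χ k)))
      + ∑ S : Finset (Fin d), shapleyWeight d S * (∑ k ∈ S, (ψ k - χ k))^2 := by
  rw [Finset.mul_sum, ← Finset.sum_sub_distrib, ← Finset.sum_add_distrib]
  apply Finset.sum_congr rfl
  intro S _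
  have h : ∑ k ∈ S, ψ k = ∑ k ∈ S, χ k + ∑ k ∈ S, (ψ k - χ k) := by
    rw [← Finset.sum_add_distrib]
    apply Finset.sum_congr rfl
    intro k _
    ring
  rw [h]
  ring

lemma cross_zero {d : ℕ} (hd : 2 ≤ d) (ν : Finset (Fin d) → ℝ) (x : Fin d → ℝ)
    (hx : ∑ i, x i = 0) :
    ∑ S : Finset (Fin d),
      shapleyWeight d S * (ν S - ∑ k ∈ S, shapley d ν k) * (∑ k ∈ S, x k) = 0 := by
  have h1 : ∀ S : Finset (Fin d),
      shapleyWeight d S * (ν S - ∑ k ∈ S, shapley d ν k) * (∑ k ∈ S, x k)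
      = ∑ k : Fin d, (if k ∈ S then
          shapleyWeight d S * (ν S - ∑ m ∈ S, shapley d ν m) * x k else 0) := by
    intro S
    have h : (∑ k ∈ S, x k) = ∑ k : Fin d, (if k ∈ S then x k else 0) := by
      rw [Finset.sum_ite_mem, univ_inter]
    rw [h, Finset.mul_sum]
    apply Finset.sum_congr rfl
    intro k _
    rw [mul_ite, mul_zero]
  rw [Finset.sum_congr rfl (fun S _ => h1 S), Finset.sum_comm]
  have h2 : ∀ k : Fin d,
      (∑ S : Finset (Fin d), if k ∈ S then
          shapleyWeight d S * (ν S - ∑ m ∈ S, shapley d ν m) * x k else 0)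
      = (∑ S : Finset (Fin d), if k ∈ S then
          shapleyWeight d S * (ν S - ∑ m ∈ S, shapley d ν m) else 0) * x k := by
    intro k
    rw [Finset.sum_mul]
    apply Finset.sum_congr rfl
    intro S _
    rw [ite_mul, zero_mul]
  rw [Finset.sum_congr rfl (fun k _ => h2 k)]
  have i0 : Fin d := ⟨0, by omega⟩
  have h3 : ∀ k : Fin d,
      (∑ S : Finset (Fin d), if k ∈ S then
          shapleyWeight d S * (ν S - ∑ m ∈ S, shapley d ν m) else 0)
      = (∑ S : Finset (Fin d), if i0 ∈ S then
          shapleyWeight d S * (ν S - ∑ m ∈ S, shapley d ν m) else 0) :=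
    fun k => grad_const hd ν k i0
  calc ∑ k : Fin d, (∑ S : Finset (Fin d), if k ∈ S then
          shapleyWeight d S * (ν S - ∑ m ∈ S, shapley d ν m) else 0) * x k
      = ∑ k : Fin d, (∑ S : Finset (Fin d), if i0 ∈ S then
          shapleyWeight d S * (ν S - ∑ m ∈ S, shapley d ν m) else 0) * x k := by
        apply Finset.sum_congr rfl
        intro k _
        rw [h3 k]
    _ = (∑ S : Finset (Fin d), if i0 ∈ S then
          shapleyWeight d S * (ν S - ∑ m ∈ S, shapley d ν m) else 0) * ∑ k, x k := by
        rw [Finset.mul_sum]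
    _ = 0 := by rw [hx, mul_zero]

/-- The least-squares (KernelSHAP) characterization of the Shapley value: the vector of Shapley
values is the unique minimizer of the weighted least squares objective subject to efficiency. -/
theorem shapley_is_unique_constrained_minimizer
    (d : ℕ) (hd : 2 ≤ d)
    (ν : Finset (Fin d) → ℝ) (hν0 : ν ∅ = 0) :
    ∀ φ : Fin d → ℝ,
      ((∑ i, φ i = ν Finset.univ) ∧
        ∀ ψ : Fin d → ℝ, (∑ i, ψ i = ν Finset.univ) →
          (∑ S : Finset (Fin d), shapleyWeight d S * (ν S - ∑ i ∈ S, φ i) ^ 2) ≤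
            (∑ S : Finset (Fin d), shapleyWeight d S * (ν S - ∑ i ∈ S, ψ i) ^ 2)) ↔
      φ = fun i => shapley d ν i := by
  intro φ
  have heff : ∑ i, shapley d ν i = ν univ := sum_shapley_eq hd ν hν0
  constructor
  · rintro ⟨hc, hmin⟩
    have hle := hmin (shapley d ν) heff
    have hx : ∑ i, (φ i - shapley d ν i) = 0 := by
      rw [Finset.sum_sub_distrib, hc, heff, sub_self]
    have hexp := expand ν (shapley d ν) φ
    rw [cross_zero hd ν _ hx] at hexp
    have hQ : (∑ S : Finset (Fin d),
        shapleyWeight d S * (∑ k ∈ S, (φ k - shapley d ν k))^2) ≤ 0 := by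
      linarith
    funext i
    have hterm : shapleyWeight d {i} * (∑ k ∈ {i}, (φ k - shapley d ν k))^2
        ≤ ∑ S : Finset (Fin d), shapleyWeight d S * (∑ k ∈ S, (φ k - shapley d ν k))^2 := by
      apply Finset.single_le_sum (f := fun S =>
        shapleyWeight d S * (∑ k ∈ S, (φ k - shapley d ν k))^2)
      · intro S _
        exact mul_nonneg (weight_nonneg S) (sq_nonneg _)
      · exact mem_univ _
    rw [weight_singleton hd i, Finset.sum_singleton, one_mul] at hterm
    have : (φ i - shapley d ν i)^2 = 0 := le_antisymm (by linarith) (sq_nonneg _)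
    have := pow_eq_zero_iff (n := 2) (by norm_num) |>.1 this
    simpa [sub_eq_zero] using this
  · intro h
    subst h
    constructor
    · exact heff
    · intro ψ hψ
      have hx : ∑ i, (ψ i - shapley d ν i) = 0 := by
        rw [Finset.sum_sub_distrib, hψ, heff, sub_self]
      have hexp := expand ν (shapley d ν) ψ
      rw [cross_zero hd ν _ hx] at hexp
      have hQ : 0 ≤ ∑ S : Finset (Fin d),
          shapleyWeight d S * (∑ k ∈ S, (ψ k - shapley d ν k))^2 :=
        Finset.sum_nonneg fun S _ => mul_nonneg (weight_nonneg S) (sq_nonneg _)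
      linarith
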